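/- arXiv:1806.00493 — 3 statements merged into one kernel-verified Lean document; each statement's English description precedes it below -/
import Mathlib

section
/- For any integer t ≥ 3 there exists n₀ such that every (n,d,λ)-graph G with n ≥ n₀ and λ ≤ d^{t−1}/(20t·4^{t−2}·n^{t−2}) satisfies: if G' is a graph on V(G) with maximum degree at most (d/(4n))^{t−2}·d/(20t), then for every vertex v of G there exists a family of at least d/(2t−2) copies of K_t in G∖G', all containing v and pairwise intersecting exactly in {v}. -/
open Finset

namespace NDL

variable {V : Type*} [Fintype V] [DecidableEq V]

/-- Number of ordered pairs `(a,b) ∈ A × B` with `ab` an edge (edges inside `A ∩ B`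
are counted twice). -/
def epairs (G : SimpleGraph V) [DecidableRel G.Adj] (A B : Finset V) : ℕ :=
  ((A ×ˢ B).filter fun p => G.Adj p.1 p.2).card

/-- `G` is an `(n,d,λ)`-graph: an `n`-vertex `d`-regular graph whose adjacency matrix has
one eigenvalue equal to `d` and all remaining eigenvalues at most `lam` in absolute value. -/
def IsNDL {n : ℕ} (G : SimpleGraph (Fin n)) [DecidableRel G.Adj] (d : ℕ) (lam : ℝ) : Prop :=
  G.IsRegularOfDegree d ∧
  ∃ (hA : Matrix.IsHermitian (G.adjMatrix ℝ)) (i₀ : Fin n),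
    hA.eigenvalues i₀ = d ∧ ∀ i, i ≠ i₀ → |hA.eigenvalues i| ≤ lam

/-- The copies of `K_t` of `G` lying inside the vertex set `U`. -/
def KtOn (G : SimpleGraph V) [DecidableRel G.Adj] (t : ℕ) (U : Finset V) :
    Finset (Finset V) :=
  (G.cliqueFinset t).filter (· ⊆ U)

/-- The value of a fractional `K_t`-matching in `G[U]`. -/
noncomputable def matchVal (G : SimpleGraph V) [DecidableRel G.Adj] (t : ℕ) (U : Finset V)
    (f : Finset V → ℝ) : ℝ :=
  ∑ T ∈ KtOn G t U, f T

/-- `f` is a fractional `K_t`-matching of the weighted graph `(G[U], w)`. -/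
def IsFracMatching (G : SimpleGraph V) [DecidableRel G.Adj] (t : ℕ) (w : V → V → ℝ)
    (U : Finset V) (f : Finset V → ℝ) : Prop :=
  (∀ T, 0 ≤ f T) ∧ (∀ T, T ∉ KtOn G t U → f T = 0) ∧
  (∀ v ∈ U, ∑ T ∈ (KtOn G t U).filter (v ∈ ·), f T ≤ 1) ∧
  (∀ u ∈ U, ∀ v ∈ U, G.Adj u v →
    ∑ T ∈ (KtOn G t U).filter (fun T => u ∈ T ∧ v ∈ T), f T ≤ w u v)

/-- `f` is a fractional `K_t`-factor of the weighted graph `(G, w)`. -/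
def IsFracFactor (G : SimpleGraph V) [DecidableRel G.Adj] (t : ℕ) (w : V → V → ℝ)
    (f : Finset V → ℝ) : Prop :=
  IsFracMatching G t w Finset.univ f ∧
  ∀ v, ∑ T ∈ (KtOn G t Finset.univ).filter (v ∈ ·), f T = 1

/-- `∑_{uv ∈ binom(U,2)} h(uv)` for a symmetric function `h`. -/
noncomputable def pairSum (U : Finset V) (h : V → V → ℝ) : ℝ :=
  (∑ u ∈ U, ∑ v ∈ U.erase u, h u v) / 2

/-- `∑_{uv ∈ E(G[U])} h(uv) * w(uv)` for symmetric functions `h`, `w`. -/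
noncomputable def edgeWSum (G : SimpleGraph V) [DecidableRel G.Adj] (U : Finset V)
    (h w : V → V → ℝ) : ℝ :=
  (∑ u ∈ U, ∑ v ∈ (U.erase u).filter (G.Adj u), h u v * w u v) / 2

/-- Property `P(t, D, D', n)` of a graph `H`. -/
def PropertyP (H : SimpleGraph V) [DecidableRel H.Adj] (t D : ℕ) (D' : ℝ) (n : ℕ) : Prop :=
  ∀ U : Finset V, (n : ℝ) - D ≤ U.card →
    ∀ U₀ ⊆ U, (U₀.card : ℝ) = (D : ℝ) / t →
      ∃ F : Finset (Finset V),
        D' / ((t : ℝ) - 1) ≤ F.card ∧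
        (∀ T ∈ F, H.IsNClique t T ∧ T ⊆ U ∧ (T ∩ U₀).card = 1) ∧
        (∀ T ∈ F, ∀ T' ∈ F, T ≠ T' → T ∩ T' ⊆ U₀)

end NDL


open Matrix

private lemma expansion {n : ℕ} {G : SimpleGraph (Fin n)} [DecidableRel G.Adj] {d : ℕ} {lam : ℝ}
    (hreg : G.IsRegularOfDegree d) (hA : (G.adjMatrix ℝ).IsHermitian) {i₀ : Fin n}
    (h0 : hA.eigenvalues i₀ = d) (hi : ∀ i, i ≠ i₀ → |hA.eigenvalues i| ≤ lam)
    (hlam : lam < d) (hn : 0 < n) (x : Fin n → ℝ) :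
    |x ⬝ᵥ (G.adjMatrix ℝ).mulVec x - d * (∑ i, x i)^2 / n|
      ≤ lam * (x ⬝ᵥ x - (∑ i, x i)^2 / n) ∧
    0 ≤ x ⬝ᵥ x - (∑ i, x i)^2 / n := by
  classical
  set A := G.adjMatrix ℝ with hAdef
  let b := hA.eigenvectorBasis
  let μ := hA.eigenvalues
  have hip : ∀ u v : EuclideanSpace ℝ (Fin n), (inner ℝ u v : ℝ) = dotProduct u v := by
    intro u v; rw [EuclideanSpace.inner_eq_star_dotProduct, star_trivial]; exact dotProduct_comm _ _
  have hAsymm : ∀ i j, A i j = A j i := fun i j => by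
    simp [hAdef, SimpleGraph.adjMatrix_apply, SimpleGraph.adj_comm]
  have hAs : ∀ u v : Fin n → ℝ, u ⬝ᵥ A *ᵥ v = v ⬝ᵥ A *ᵥ u := by
    intro u v
    simp only [dotProduct, Matrix.mulVec, Finset.mul_sum]
    rw [Finset.sum_comm]
    exact Finset.sum_congr rfl fun i _ => Finset.sum_congr rfl fun j _ => by
      rw [hAsymm j i]; ring
  -- quadratic form expansion
  have hquad : ∀ u : EuclideanSpace ℝ (Fin n), (u : Fin n → ℝ) ⬝ᵥ A *ᵥ u
      = ∑ i, μ i * (inner (𝕜 := ℝ) u (b i))^2 := by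
    intro u
    have hp := b.sum_inner_mul_inner (𝕜 := ℝ) u
      (WithLp.toLp 2 (A *ᵥ u : Fin n → ℝ))
    rw [hip] at hp
    rw [show ((u : Fin n → ℝ) ⬝ᵥ A *ᵥ u) = dotProduct u (WithLp.toLp 2 (A *ᵥ u : Fin n → ℝ)) from rfl, ← hp]
    refine Finset.sum_congr rfl fun i _ => ?_
    have h2 : (inner (𝕜 := ℝ) (b i) (WithLp.toLp 2 (A *ᵥ u : Fin n → ℝ)) : ℝ)
        = μ i * inner (𝕜 := ℝ) u (b i) := by
      rw [hip, hip]
      show (b i : Fin n → ℝ) ⬝ᵥ (A *ᵥ u) = μ i * ((u : Fin n → ℝ) ⬝ᵥ (b i : Fin n → ℝ))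
      rw [hAs (b i : Fin n → ℝ) u]
      rw [show (A *ᵥ (b i : Fin n → ℝ)) = μ i • (b i : Fin n → ℝ) from hA.mulVec_eigenvectorBasis i]
      simp only [dotProduct, PiLp.smul_apply, Pi.smul_apply, smul_eq_mul, Finset.mul_sum]
      exact Finset.sum_congr rfl fun j _ => by ring
    rw [h2]; ring
  -- the all-ones vector is the top eigenvector
  set e : Fin n → ℝ := fun _ => 1 with hedef
  have hAe : A *ᵥ e = fun _ => (d:ℝ) := by
    funext i
    rw [hAdef, SimpleGraph.adjMatrix_mulVec_apply]
    simp [hedef, hreg i]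
  have hdemu : ∀ i, i ≠ i₀ → e ⬝ᵥ (b i : Fin n → ℝ) = 0 := by
    intro i hii
    have h1 : e ⬝ᵥ (A *ᵥ (b i : Fin n → ℝ)) = (b i : Fin n → ℝ) ⬝ᵥ (A *ᵥ e) := hAs _ _
    rw [show (A *ᵥ (b i : Fin n → ℝ)) = μ i • (b i : Fin n → ℝ) from hA.mulVec_eigenvectorBasis i,
      hAe] at h1
    have hL : e ⬝ᵥ (μ i • (b i : Fin n → ℝ)) = μ i * (e ⬝ᵥ (b i : Fin n → ℝ)) := by
      simp only [dotProduct, PiLp.smul_apply, Pi.smul_apply, smul_eq_mul, Finset.mul_sum]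
      exact Finset.sum_congr rfl fun j _ => by ring
    have hR : (b i : Fin n → ℝ) ⬝ᵥ (fun _ => (d:ℝ)) = (d:ℝ) * (e ⬝ᵥ (b i : Fin n → ℝ)) := by
      simp only [dotProduct, hedef, Finset.mul_sum]
      exact Finset.sum_congr rfl fun j _ => by ring
    have h2 : μ i * (e ⬝ᵥ (b i : Fin n → ℝ)) = (d:ℝ) * (e ⬝ᵥ (b i : Fin n → ℝ)) := by
      rw [← hL, ← hR]; exact h1
    have h3 : μ i ≠ (d:ℝ) := by
      have := hi i hii
      have h4 : μ i ≤ lam := le_trans (le_abs_self _) this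
      linarith
    rcases mul_eq_mul_right_iff.1 h2 with h | h
    · exact absurd h h3
    · exact h
  set a : ℝ := e ⬝ᵥ (b i₀ : Fin n → ℝ) with hadef
  have hrepr := b.sum_repr' (WithLp.toLp 2 e)
  have he : (WithLp.toLp 2 e) = a • b i₀ := by
    rw [← hrepr, Finset.sum_eq_single i₀]
    · congr 1
    · intro i _ hii
      rw [hip, WithLp.ofLp_toLp, show (b i : Fin n → ℝ) ⬝ᵥ e = e ⬝ᵥ (b i : Fin n → ℝ) from dotProduct_comm _ _,
        hdemu i hii, zero_smul]
    · intro h; exact absurd (Finset.mem_univ i₀) h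
  have hee : e ⬝ᵥ e = (n:ℝ) := by simp [hedef, dotProduct]
  have haa : a * a = (n:ℝ) := by
    rw [← hee, show e ⬝ᵥ e = inner ℝ (WithLp.toLp 2 e) (WithLp.toLp 2 e) from (hip (WithLp.toLp 2 e) (WithLp.toLp 2 e)).symm]
    nth_rewrite 1 [he]
    rw [real_inner_smul_left, he, real_inner_smul_right]
    have hb1 : (inner ℝ (b i₀) (b i₀) : ℝ) = 1 := by
      rw [real_inner_self_eq_norm_sq, b.orthonormal.1 i₀]; norm_num
    rw [hb1]; ring
  -- coordinates of x
  set X : EuclideanSpace ℝ (Fin n) := WithLp.toLp 2 x with hXdef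
  set c : Fin n → ℝ := fun i => (inner ℝ X (b i) : ℝ)
    with hcdef
  set S : ℝ := ∑ i, x i with hSdef
  have hxe : x ⬝ᵥ e = S := by simp [hedef, hSdef, dotProduct]
  have hc : ∀ i, (inner ℝ X (b i) : ℝ) = c i := fun i => rfl
  have h8 : (inner ℝ X (WithLp.toLp 2 e) : ℝ) = S := by
    rw [hip]; exact hxe
  have hxa : S = a * c i₀ := by
    calc S = (inner ℝ X (WithLp.toLp 2 e) : ℝ) := h8.symm
    _ = (inner ℝ X (a • b i₀) : ℝ) := by rw [he]
    _ = a * c i₀ := by rw [real_inner_smul_right, hc]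
  have hc0 : c i₀ ^ 2 = S ^ 2 / n := by
    have hn' : (n:ℝ) ≠ 0 := by positivity
    have ha2 : a ^ 2 = (n:ℝ) := by rw [pow_two]; exact haa
    rw [hxa, mul_pow, ha2, mul_comm, mul_div_assoc, div_self hn', mul_one]
  have hpar : (X : Fin n → ℝ) ⬝ᵥ X = ∑ i, c i ^ 2 := by
    have hp := b.sum_inner_mul_inner (𝕜 := ℝ) X
      X
    rw [hip] at hp
    rw [← hp]
    exact Finset.sum_congr rfl fun i _ => by
      rw [pow_two, ← hc i, real_inner_comm X (b i)]
  have hqx := hquad X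
  simp only [hc] at hqx
  set R : ℝ := ∑ i ∈ Finset.univ.erase i₀, c i ^ 2 with hRdef
  have hR0 : (0:ℝ) ≤ R := Finset.sum_nonneg fun i _ => sq_nonneg _
  have hsplit : ∀ f : Fin n → ℝ, ∑ i, f i = ∑ i ∈ Finset.univ.erase i₀, f i + f i₀ :=
    fun f => (Finset.sum_erase_add _ _ (Finset.mem_univ i₀)).symm
  have e1 : (X : Fin n → ℝ) ⬝ᵥ A *ᵥ X - (d:ℝ) * S^2 / n
      = ∑ i ∈ Finset.univ.erase i₀, μ i * c i ^2 := by
    rw [hqx, hsplit (fun i => μ i * c i ^2)]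
    have : μ i₀ * c i₀ ^ 2 = (d:ℝ) * S ^2 / n := by
      rw [show μ i₀ = (d:ℝ) from h0, hc0]; ring
    rw [this]; ring
  have e2 : (X : Fin n → ℝ) ⬝ᵥ X - S^2/n = R := by
    rw [hpar, hsplit (fun i => c i ^2), hc0, hRdef]; ring
  constructor
  · show |(X : Fin n → ℝ) ⬝ᵥ A *ᵥ X - (d:ℝ) * S^2 / n| ≤ lam * ((X : Fin n → ℝ) ⬝ᵥ X - S^2/n)
    rw [e1, e2]
    calc |∑ i ∈ Finset.univ.erase i₀, μ i * c i ^2|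
        ≤ ∑ i ∈ Finset.univ.erase i₀, |μ i * c i ^2| := Finset.abs_sum_le_sum_abs _ _
      _ ≤ ∑ i ∈ Finset.univ.erase i₀, lam * c i ^2 := by
          refine Finset.sum_le_sum fun i hi' => ?_
          rw [abs_mul, abs_of_nonneg (sq_nonneg (c i))]
          exact mul_le_mul_of_nonneg_right (hi i (Finset.mem_erase.1 hi').1) (sq_nonneg _)
      _ = lam * R := by rw [hRdef, Finset.mul_sum]
  · show (0:ℝ) ≤ (X : Fin n → ℝ) ⬝ᵥ X - S^2/n
    rw [e2]; exact hR0

private lemma ep_sum {V : Type*} [Fintype V] [DecidableEq V] (G : SimpleGraph V)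
    [DecidableRel G.Adj] (A B : Finset V) :
    NDL.epairs G A B = ∑ a ∈ A, ∑ b ∈ B, if G.Adj a b then 1 else 0 := by
  rw [NDL.epairs, Finset.card_filter, Finset.sum_product]

private lemma sum_boole_mem {n : ℕ} (U : Finset (Fin n)) (f : Fin n → ℝ) :
    ∑ i, (if i ∈ U then (1:ℝ) else 0) * f i = ∑ i ∈ U, f i := by
  simp only [boole_mul]
  rw [Finset.sum_ite_mem, Finset.univ_inter]

private lemma mixing {n : ℕ} {G : SimpleGraph (Fin n)} [DecidableRel G.Adj] {d : ℕ} {lam : ℝ}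
    (hreg : G.IsRegularOfDegree d) (hA : (G.adjMatrix ℝ).IsHermitian) {i₀ : Fin n}
    (h0 : hA.eigenvalues i₀ = d) (hi : ∀ i, i ≠ i₀ → |hA.eigenvalues i| ≤ lam)
    (hlam : lam < d) (hn : 0 < n) (hlam0 : 0 ≤ lam) (U : Finset (Fin n)) :
    (d:ℝ) * U.card^2 / n - lam * U.card ≤ (NDL.epairs G U U : ℝ) := by
  classical
  set x : Fin n → ℝ := fun i => if i ∈ U then 1 else 0 with hxdef
  have hsx : ∑ i, x i = U.card := by
    rw [hxdef]
    rw [Finset.sum_ite_mem, Finset.univ_inter, Finset.sum_const]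
    simp
  have hxx : x ⬝ᵥ x = (U.card : ℝ) := by
    rw [← hsx]
    refine Finset.sum_congr rfl fun i _ => ?_
    by_cases h : i ∈ U <;> simp [hxdef, h]
  have hq : x ⬝ᵥ (G.adjMatrix ℝ) *ᵥ x = (NDL.epairs G U U : ℝ) := by
    calc x ⬝ᵥ (G.adjMatrix ℝ) *ᵥ x
        = ∑ i, (if i ∈ U then (1:ℝ) else 0) *
            ∑ j, (if G.Adj i j then (1:ℝ) else 0) * (if j ∈ U then (1:ℝ) else 0) := by
          refine Finset.sum_congr rfl fun i _ => ?_
          simp only [Matrix.mulVec, dotProduct, SimpleGraph.adjMatrix_apply, hxdef]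
      _ = ∑ i ∈ U, ∑ j, (if G.Adj i j then (1:ℝ) else 0) * (if j ∈ U then (1:ℝ) else 0) :=
          sum_boole_mem U _
      _ = ∑ i ∈ U, ∑ j ∈ U, (if G.Adj i j then (1:ℝ) else 0) := by
          refine Finset.sum_congr rfl fun i _ => ?_
          rw [← sum_boole_mem U (fun j => if G.Adj i j then (1:ℝ) else 0)]
          exact Finset.sum_congr rfl fun j _ => by ring
      _ = (NDL.epairs G U U : ℝ) := by
          rw [ep_sum]
          push_cast
          rfl
  have hx := expansion hreg hA h0 hi hlam hn x
  rw [hq, hxx, hsx] at hx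
  obtain ⟨h1, h2⟩ := hx
  have h3 := (abs_le.1 h1).1
  have h4 : 0 ≤ lam * ((U.card:ℝ)^2 / n) := by positivity
  nlinarith [h3, h4]

private lemma cliques_in {n t d : ℕ} {G G' : SimpleGraph (Fin n)} [DecidableRel G.Adj]
    [DecidableRel G'.Adj] {lam : ℝ}
    (ht : 3 ≤ t) (hn : 0 < n) (hd : 0 < d) (hdn : (d:ℝ) ≤ n)
    (hmix : ∀ U : Finset (Fin n), (d:ℝ) * U.card^2 / n - lam * U.card ≤ (NDL.epairs G U U : ℝ))
    (hlam : lam ≤ ((d:ℝ)/(4*n))^(t-2) * ((d:ℝ)/(20*t)))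
    (hG' : ∀ v, (G'.degree v : ℝ) ≤ ((d:ℝ)/(4*n))^(t-2) * ((d:ℝ)/(20*t))) :
    ∀ s j : ℕ, j + s = t - 1 → ∀ U : Finset (Fin n),
      ((d:ℝ)/(4*n))^j * ((d:ℝ)/(20*t)) ≤ U.card →
      ∃ T, T ⊆ U ∧ (G \ G').IsNClique s T := by
  classical
  have hdr : (0:ℝ) < d := by exact_mod_cast hd
  have hnr : (0:ℝ) < n := by exact_mod_cast hn
  have htr : (0:ℝ) < t := by
    have : 0 < t := by omega
    exact_mod_cast this
  have hq0 : (0:ℝ) < (d:ℝ)/(4*n) := by positivity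
  have hq1 : (d:ℝ)/(4*n) ≤ 1 := by
    rw [div_le_one (by positivity)]
    linarith
  have hm0 : ∀ j : ℕ, (0:ℝ) < ((d:ℝ)/(4*n))^j * ((d:ℝ)/(20*t)) := by
    intro j; positivity
  have hmono : ∀ {j k : ℕ}, j ≤ k →
      ((d:ℝ)/(4*n))^k * ((d:ℝ)/(20*t)) ≤ ((d:ℝ)/(4*n))^j * ((d:ℝ)/(20*t)) := by
    intro j k hjk
    exact mul_le_mul_of_nonneg_right (pow_le_pow_of_le_one hq0.le hq1 hjk) (by positivity)
  intro s
  induction s with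
  | zero =>
    intro j hj U hU
    exact ⟨∅, Finset.empty_subset U, by simp [SimpleGraph.isNClique_empty]⟩
  | succ s ih =>
    intro j hj U hU
    have hUpos : (0:ℝ) < U.card := lt_of_lt_of_le (hm0 j) hU
    have hUne : U.Nonempty := by
      rw [← Finset.card_pos]
      exact_mod_cast hUpos
    set Δ : ℝ := ((d:ℝ)/(4*n))^(t-2) * ((d:ℝ)/(20*t)) with hDdef
    set W : Fin n → Finset (Fin n) :=
      fun u => U.filter (fun w => G.Adj u w ∧ ¬ G'.Adj u w) with hWdef
    -- counting: the G-pairs inside U split into (G∖G')-pairs and G'-pairs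
    have hsplit : (NDL.epairs G U U : ℝ)
        ≤ ∑ u ∈ U, ((W u).card:ℝ) + ∑ u ∈ U, (G'.degree u : ℝ) := by
      have h1 : (NDL.epairs G U U : ℝ) = ∑ u ∈ U, ∑ w ∈ U, (if G.Adj u w then (1:ℝ) else 0) := by
        rw [ep_sum]; push_cast; rfl
      have h2 : ∀ u, ((W u).card:ℝ) = ∑ w ∈ U, (if G.Adj u w ∧ ¬ G'.Adj u w then (1:ℝ) else 0) := by
        intro u
        rw [hWdef, Finset.card_filter]
        push_cast; rfl
      have h3 : ∀ u, ∑ w ∈ U, (if G'.Adj u w then (1:ℝ) else 0) ≤ (G'.degree u : ℝ) := by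
        intro u
        have : ∑ w ∈ U, (if G'.Adj u w then (1:ℝ) else 0) = ((U.filter (G'.Adj u)).card : ℝ) := by
          rw [Finset.card_filter]; push_cast; rfl
        rw [this]
        have hsub : U.filter (G'.Adj u) ⊆ G'.neighborFinset u := by
          intro w hw
          rw [SimpleGraph.mem_neighborFinset]
          exact (Finset.mem_filter.1 hw).2
        have := Finset.card_le_card hsub
        rw [SimpleGraph.card_neighborFinset_eq_degree] at this
        exact_mod_cast this
      rw [h1]
      have h4 : ∀ u ∈ U, ∑ w ∈ U, (if G.Adj u w then (1:ℝ) else 0)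
          ≤ ((W u).card:ℝ) + ∑ w ∈ U, (if G'.Adj u w then (1:ℝ) else 0) := by
        intro u _
        rw [h2 u, ← Finset.sum_add_distrib]
        refine Finset.sum_le_sum fun w _ => ?_
        by_cases hgw : G.Adj u w <;> by_cases hgw' : G'.Adj u w <;> simp [hgw, hgw']
      calc ∑ u ∈ U, ∑ w ∈ U, (if G.Adj u w then (1:ℝ) else 0)
          ≤ ∑ u ∈ U, (((W u).card:ℝ) + ∑ w ∈ U, (if G'.Adj u w then (1:ℝ) else 0)) :=
            Finset.sum_le_sum h4
        _ ≤ ∑ u ∈ U, ((W u).card:ℝ) + ∑ u ∈ U, (G'.degree u : ℝ) := by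
            rw [Finset.sum_add_distrib]
            exact add_le_add le_rfl (Finset.sum_le_sum fun u _ => h3 u)
    have hdegsum : ∑ u ∈ U, (G'.degree u : ℝ) ≤ Δ * U.card := by
      calc ∑ u ∈ U, (G'.degree u : ℝ) ≤ ∑ _u ∈ U, Δ := Finset.sum_le_sum fun u _ => hG' u
        _ = Δ * U.card := by rw [Finset.sum_const, nsmul_eq_mul]; ring
    have hkey : ∃ u ∈ U, (d:ℝ) * U.card / n - lam - Δ ≤ ((W u).card : ℝ) := by
      by_contra hcon
      push_neg at hcon
      have h2 : ∑ u ∈ U, ((W u).card:ℝ) < ((d:ℝ) * U.card / n - lam - Δ) * U.card := by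
        calc ∑ u ∈ U, ((W u).card:ℝ) < ∑ _u ∈ U, ((d:ℝ) * U.card / n - lam - Δ) :=
            Finset.sum_lt_sum_of_nonempty hUne fun u hu => hcon u hu
          _ = ((d:ℝ) * U.card / n - lam - Δ) * U.card := by
            rw [Finset.sum_const, nsmul_eq_mul]; ring
      have hmixU := hmix U
      have h5 : ((d:ℝ) * U.card / n - lam - Δ) * U.card
          = (d:ℝ) * (U.card:ℝ)^2 / n - lam * U.card - Δ * U.card := by ring
      rw [h5] at h2
      linarith
    obtain ⟨u, hu, hWu⟩ := hkey
    rcases Nat.eq_zero_or_pos s with hs0 | hs1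
    · subst hs0
      refine ⟨{u}, Finset.singleton_subset_iff.2 hu, ?_⟩
      rw [SimpleGraph.isNClique_one]
      exact ⟨u, rfl⟩
    · have hj1 : (j+1) + s = t - 1 := by omega
      have hjle : j + 1 ≤ t - 2 := by omega
      have hWcard : ((d:ℝ)/(4*n))^(j+1) * ((d:ℝ)/(20*t)) ≤ ((W u).card : ℝ) := by
        have hA4 : (d:ℝ)/n * (((d:ℝ)/(4*n))^j * ((d:ℝ)/(20*t)))
            = 4 * (((d:ℝ)/(4*n))^(j+1) * ((d:ℝ)/(20*t))) := by
          rw [pow_succ]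
          field_simp
        have hA : 4 * (((d:ℝ)/(4*n))^(j+1) * ((d:ℝ)/(20*t))) ≤ (d:ℝ) * U.card / n := by
          rw [← hA4]
          have := mul_le_mul_of_nonneg_left hU (le_of_lt (by positivity : (0:ℝ) < (d:ℝ)/n))
          calc (d:ℝ)/n * (((d:ℝ)/(4*n))^j * ((d:ℝ)/(20*t))) ≤ (d:ℝ)/n * U.card := this
            _ = (d:ℝ) * U.card / n := by ring
        have hB : lam ≤ ((d:ℝ)/(4*n))^(j+1) * ((d:ℝ)/(20*t)) := le_trans hlam (hmono hjle)
        have hC : Δ ≤ ((d:ℝ)/(4*n))^(j+1) * ((d:ℝ)/(20*t)) := hmono hjle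
        linarith
      obtain ⟨T, hTsub, hTcl⟩ := ih (j+1) hj1 (W u) hWcard
      refine ⟨insert u T, ?_, ?_⟩
      · refine Finset.insert_subset hu (hTsub.trans ?_)
        rw [hWdef]
        exact Finset.filter_subset _ _
      · refine hTcl.insert fun b hb => ?_
        have hbW := hTsub hb
        rw [hWdef, Finset.mem_filter] at hbW
        rw [SimpleGraph.sdiff_adj]
        exact hbW.2



/-- Every vertex lies in a large family of copies of `K_t` in `G ∖ G'` that pairwise
intersect exactly in that vertex. -/
theorem stmt10 (t : ℕ) (ht : 3 ≤ t) :
    ∃ n₀ : ℕ, ∀ n : ℕ, n₀ ≤ n →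
      ∀ (d : ℕ) (G G' : SimpleGraph (Fin n)) [DecidableRel G.Adj] [DecidableRel G'.Adj]
        (lam : ℝ),
        NDL.IsNDL G d lam →
        lam ≤ (d : ℝ) ^ (t - 1) / (20 * (t : ℝ) * 4 ^ (t - 2) * (n : ℝ) ^ (t - 2)) →
        (∀ v, (G'.degree v : ℝ) ≤ ((d : ℝ) / (4 * n)) ^ (t - 2) * d / (20 * t)) →
        ∀ v : Fin n, ∃ F : Finset (Finset (Fin n)),
          (d : ℝ) / (2 * (t : ℝ) - 2) ≤ F.card ∧
          (∀ T ∈ F, (G \ G').IsNClique t T ∧ v ∈ T) ∧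
          (∀ T ∈ F, ∀ T' ∈ F, T ≠ T' → T ∩ T' = {v}) := by
  classical
  refine ⟨1, fun n hn d G G' _ _ lam hNDL hlam hG' v => ?_⟩
  rw [NDL.IsNDL] at hNDL
  obtain ⟨hreg, hA, i₀, h0, hi⟩ := hNDL
  have hn0 : 0 < n := hn
  have htr : (0:ℝ) < t := by
    have : 0 < t := by omega
    exact_mod_cast this
  have ht3 : (3:ℝ) ≤ t := by exact_mod_cast ht
  have htt : (0:ℝ) < 2*(t:ℝ) - 2 := by linarith
  rcases Nat.eq_zero_or_pos d with hd0 | hd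
  · refine ⟨∅, ?_, by simp, by simp⟩
    subst hd0
    simp
  have hdn : d < n := by
    have h1 := G.degree_lt_card_verts v
    rw [hreg v, Fintype.card_fin] at h1
    exact h1
  have hdr : (0:ℝ) < d := by exact_mod_cast hd
  have hnr : (0:ℝ) < n := by exact_mod_cast hn0
  have hdnr : (d:ℝ) ≤ n := by exact_mod_cast hdn.le
  set q : ℝ := (d:ℝ)/(20*t) with hqdef
  have hq_pos : 0 < q := by rw [hqdef]; positivity
  have heq1 : (d : ℝ) ^ (t - 1) / (20 * (t : ℝ) * 4 ^ (t - 2) * (n : ℝ) ^ (t - 2))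
      = ((d:ℝ)/(4*n))^(t-2) * q := by
    rw [hqdef, show t-1 = (t-2)+1 by omega, pow_succ, div_pow, mul_pow]
    field_simp
  have hlam' : lam ≤ ((d:ℝ)/(4*n))^(t-2) * q := heq1 ▸ hlam
  have hG'' : ∀ w, (G'.degree w : ℝ) ≤ ((d:ℝ)/(4*n))^(t-2) * q := by
    intro w
    refine le_trans (hG' w) (le_of_eq ?_)
    rw [hqdef, mul_div_assoc]
  have hpow1 : ((d:ℝ)/(4*n))^(t-2) ≤ 1 := by
    apply pow_le_one₀ (by positivity)
    rw [div_le_one (by positivity)]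
    linarith
  have hlamq : lam ≤ q := le_trans hlam' (by
    calc ((d:ℝ)/(4*n))^(t-2) * q ≤ 1 * q := mul_le_mul_of_nonneg_right hpow1 hq_pos.le
      _ = q := one_mul q)
  have hlamd : lam < d := by
    have : q < d := by
      rw [hqdef, div_lt_iff₀ (by positivity)]
      nlinarith
    linarith
  have hlam0 : 0 ≤ lam := by
    have h2n : 1 < n := by omega
    obtain ⟨i, hii⟩ := Fintype.exists_ne_of_one_lt_card (by simpa using h2n) i₀
    exact le_trans (abs_nonneg _) (hi i hii)
  have hmix : ∀ U : Finset (Fin n),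
      (d:ℝ) * U.card^2 / n - lam * U.card ≤ (NDL.epairs G U U : ℝ) :=
    fun U => mixing hreg hA h0 hi hlamd hn0 hlam0 U
  have hcl := cliques_in ht hn0 hd hdnr hmix (hqdef ▸ hlam') (fun w => hqdef ▸ hG'' w)
  set N : ℕ := ⌈(d:ℝ)/(2*(t:ℝ)-2)⌉₊ with hNdef
  have key : ∀ k : ℕ, k ≤ N → ∃ F : Finset (Finset (Fin n)),
      F.card = k ∧ (∀ T ∈ F, (G \ G').IsNClique t T ∧ v ∈ T) ∧
      (∀ T ∈ F, ∀ T' ∈ F, T ≠ T' → T ∩ T' = {v}) ∧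
      ((F.biUnion id).card : ℝ) ≤ k * t := by
    intro k
    induction k with
    | zero => exact fun _ => ⟨∅, by simp, by simp, by simp, by simp⟩
    | succ k ihk =>
      intro hk1
      obtain ⟨F, hFc, hFcl, hFint, hFW⟩ := ihk (by omega)
      set Wb := F.biUnion id with hWbdef
      set S := G.neighborFinset v \ (G'.neighborFinset v ∪ Wb) with hSdef
      have hkx : (k:ℝ) < (d:ℝ)/(2*(t:ℝ)-2) := by
        have h7 : ((N:ℕ):ℝ) < (d:ℝ)/(2*(t:ℝ)-2) + 1 := by
          rw [hNdef]
          exact Nat.ceil_lt_add_one (by positivity)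
        have h8 : (k:ℝ) + 1 ≤ (N:ℝ) := by exact_mod_cast hk1
        linarith
      have hkt : (k:ℝ) * t ≤ 3/4 * d := by
        have h9 : (k:ℝ)*t < ((d:ℝ)/(2*(t:ℝ)-2))*t := mul_lt_mul_of_pos_right hkx htr
        have h10 : ((d:ℝ)/(2*(t:ℝ)-2))*t ≤ 3/4 * d := by
          rw [div_mul_eq_mul_div, div_le_iff₀ htt]
          nlinarith
        linarith
      have hScard : q ≤ (S.card:ℝ) := by
        have h6 : (G.neighborFinset v).card ≤ S.card + (G'.neighborFinset v ∪ Wb).card := by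
          rw [hSdef]
          exact Finset.card_le_card_sdiff_add_card
        have h6' : (G.neighborFinset v).card = d := by
          rw [SimpleGraph.card_neighborFinset_eq_degree, hreg v]
        have h6'' : (G'.neighborFinset v ∪ Wb).card ≤ G'.degree v + Wb.card := by
          rw [← SimpleGraph.card_neighborFinset_eq_degree]
          exact Finset.card_union_le _ _
        have h6n : (d:ℝ) ≤ (S.card:ℝ) + (G'.degree v:ℝ) + (Wb.card:ℝ) := by
          have h14 : d ≤ S.card + G'.degree v + Wb.card := by omega
          exact_mod_cast h14
        have hqv : (G'.degree v : ℝ) ≤ q := le_trans (hG'' v) (by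
          calc ((d:ℝ)/(4*n))^(t-2) * q ≤ 1 * q := mul_le_mul_of_nonneg_right hpow1 hq_pos.le
            _ = q := one_mul q)
        have hneed : q + q ≤ (d:ℝ)/4 := by
          rw [hqdef]
          rw [← add_div, div_le_div_iff₀ (by positivity) (by norm_num)]
          nlinarith
        have hWbk : (Wb.card : ℝ) ≤ k * t := hFW
        linarith
      obtain ⟨T₀, hT0sub, hT0cl⟩ := hcl (t-1) 0 (by omega) S
        (by simpa [pow_zero, one_mul] using hScard)
      have hvS : v ∉ S := by
        intro hv
        rw [hSdef, Finset.mem_sdiff, SimpleGraph.mem_neighborFinset] at hv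
        exact G.irrefl hv.1
      have hadj : ∀ b ∈ T₀, (G \ G').Adj v b := by
        intro b hb
        have hbS := hT0sub hb
        rw [hSdef, Finset.mem_sdiff, SimpleGraph.mem_neighborFinset, Finset.mem_union,
          not_or, SimpleGraph.mem_neighborFinset] at hbS
        rw [SimpleGraph.sdiff_adj]
        exact ⟨hbS.1, hbS.2.1⟩
      have hTcl : (G \ G').IsNClique t (insert v T₀) := by
        have h11 := hT0cl.insert hadj
        rwa [show t - 1 + 1 = t by omega] at h11
      have hT0ne : T₀.Nonempty := by
        rw [← Finset.card_pos, hT0cl.card_eq]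
        omega
      have hT0W : ∀ x ∈ T₀, x ∉ Wb := by
        intro x hx hxa
        have hxS := hT0sub hx
        rw [hSdef, Finset.mem_sdiff, Finset.mem_union, not_or] at hxS
        exact hxS.2.2 hxa
      have hTF : insert v T₀ ∉ F := by
        intro hTF
        obtain ⟨w, hw⟩ := hT0ne
        exact hT0W w hw (Finset.mem_biUnion.2 ⟨insert v T₀, hTF, Finset.mem_insert_of_mem hw⟩)
      have hnewold : ∀ T' ∈ F, (insert v T₀) ∩ T' = {v} := by
        intro T' hT'
        apply Finset.Subset.antisymm
        · intro x hx
          obtain ⟨hx1, hx2⟩ := Finset.mem_inter.1 hx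
          rcases Finset.mem_insert.1 hx1 with rfl | hx3
          · exact Finset.mem_singleton.2 rfl
          · exact absurd (Finset.mem_biUnion.2 ⟨T', hT', hx2⟩) (hT0W x hx3)
        · intro x hx
          rw [Finset.mem_singleton] at hx
          subst hx
          exact Finset.mem_inter.2 ⟨Finset.mem_insert_self _ _, (hFcl T' hT').2⟩
      refine ⟨insert (insert v T₀) F, ?_, ?_, ?_, ?_⟩
      · rw [Finset.card_insert_of_notMem hTF, hFc]
      · intro T' hT'
        rcases Finset.mem_insert.1 hT' with rfl | h
        · exact ⟨hTcl, Finset.mem_insert_self _ _⟩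
        · exact hFcl T' h
      · intro T1 h1 T2 h2 h12
        rcases Finset.mem_insert.1 h1 with rfl | h1'
        · rcases Finset.mem_insert.1 h2 with rfl | h2'
          · exact absurd rfl h12
          · exact hnewold T2 h2'
        · rcases Finset.mem_insert.1 h2 with rfl | h2'
          · rw [Finset.inter_comm]
            exact hnewold T1 h1'
          · exact hFint T1 h1' T2 h2' h12
      · have hsub2 : (insert (insert v T₀) F).biUnion id ⊆ (insert v T₀) ∪ Wb := by
          intro x hx
          rcases Finset.mem_biUnion.1 hx with ⟨T', hT', hxT'⟩
          rcases Finset.mem_insert.1 hT' with rfl | h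
          · exact Finset.mem_union_left _ hxT'
          · exact Finset.mem_union_right _ (Finset.mem_biUnion.2 ⟨T', h, hxT'⟩)
        have h12 : (((insert (insert v T₀) F).biUnion id).card : ℝ)
            ≤ ((insert v T₀).card : ℝ) + (Wb.card : ℝ) := by
          have := le_trans (Finset.card_le_card hsub2) (Finset.card_union_le _ _)
          exact_mod_cast this
        have h13 : ((insert v T₀).card : ℝ) = t := by
          rw [hTcl.card_eq]
        push_cast
        push_cast at h12 hFW
        linarith
  obtain ⟨F, hFc, hFcl2, hFint2, _⟩ := key N le_rfl
  refine ⟨F, ?_, hFcl2, hFint2⟩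
  rw [hFc]
  exact Nat.le_ceil _
end

section
/- Let G be an (n,d,λ)-graph and let U ⊆ V(G). Let X₂ = {v ∈ U : deg_U(v) ≤ d|U|/(2n)} be the set of vertices of U with at most d|U|/(2n) neighbors in U. Then |X₂| ≤ (2λn/d)²/|U|. -/
open Finset

namespace NDLAux

open Matrix

set_option maxHeartbeats 1600000 in
lemma mixing {n d : ℕ} (G : SimpleGraph (Fin n)) [DecidableRel G.Adj] {lam : ℝ}
    (hreg : G.IsRegularOfDegree d) (hA : Matrix.IsHermitian (G.adjMatrix ℝ)) (i₀ : Fin n)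
    (hi₀ : hA.eigenvalues i₀ = d) (hbound : ∀ i, i ≠ i₀ → |hA.eigenvalues i| ≤ lam)
    (hd : 0 < d) (hn : 0 < n) (X U : Finset (Fin n)) :
    (d : ℝ) * X.card * U.card / n - lam * Real.sqrt ((X.card : ℝ) * U.card) ≤
      ∑ a ∈ X, ((G.neighborFinset a ∩ U).card : ℝ) := by
  have hn0 : (n : ℝ) ≠ 0 := Nat.cast_ne_zero.mpr hn.ne'
  have hdn : d < n := by
    have h := G.degree_lt_card_verts (⟨0, hn⟩ : Fin n)
    rw [hreg] at h
    simpa using h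
  have : Nontrivial (Fin n) := by rw [Fin.nontrivial_iff_two_le]; omega
  obtain ⟨j, hj⟩ := exists_ne i₀
  have hlam0 : 0 ≤ lam := (abs_nonneg _).trans (hbound j hj)
  set A := G.adjMatrix ℝ with hAdef
  set P : Matrix (Fin n) (Fin n) ℝ := (hA.eigenvectorUnitary : Matrix (Fin n) (Fin n) ℝ)
    with hPdef
  set μ := hA.eigenvalues with hμdef
  have hQP : star P * P = 1 := Matrix.mem_unitaryGroup_iff'.mp hA.eigenvectorUnitary.2
  have hPQ : P * star P = 1 := Matrix.mem_unitaryGroup_iff.mp hA.eigenvectorUnitary.2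
  have hspec : A = P * Matrix.diagonal μ * star P := by
    have := hA.spectral_theorem
    simpa using this
  have hQtrans : star P = Pᵀ := by
    ext i j
    simp [Matrix.star_eq_conjTranspose, Matrix.conjTranspose_apply]
  -- coordinates w.r.t. eigenbasis
  set F : (Fin n → ℝ) → (Fin n → ℝ) := fun v => star P *ᵥ v with hFdef
  have key1 : ∀ v w : Fin n → ℝ, v ⬝ᵥ (A *ᵥ w) = ∑ i, μ i * (F v i * F w i) := by
    intro v w
    rw [hspec, ← Matrix.mulVec_mulVec, ← Matrix.mulVec_mulVec, Matrix.dotProduct_mulVec]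
    have hv : v ᵥ* P = F v := by
      show _ = star P *ᵥ v
      rw [hQtrans, Matrix.mulVec_transpose]
    rw [hv]
    simp only [hFdef, dotProduct]
    refine Finset.sum_congr rfl fun i _ => ?_
    rw [Matrix.mulVec_diagonal]
    ring
  have key2 : ∀ v w : Fin n → ℝ, F v ⬝ᵥ F w = v ⬝ᵥ w := by
    intro v w
    have hv : F v = v ᵥ* P := by
      show star P *ᵥ v = _
      rw [hQtrans, Matrix.mulVec_transpose]
    show F v ⬝ᵥ star P *ᵥ w = _
    rw [hv, ← Matrix.dotProduct_mulVec, Matrix.mulVec_mulVec, hPQ, Matrix.one_mulVec]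
  -- basic vectors
  set ones : Fin n → ℝ := fun _ => 1 with honesdef
  set x : Fin n → ℝ := fun v => if v ∈ X then 1 else 0 with hxdef
  set y : Fin n → ℝ := fun v => if v ∈ U then 1 else 0 with hydef
  have hAones : A *ᵥ ones = (d : ℝ) • ones := by
    funext v
    rw [hAdef, SimpleGraph.adjMatrix_mulVec_apply]
    simp [honesdef, hreg v]
  have honesA : ones ᵥ* A = (d : ℝ) • ones := by
    funext v
    rw [hAdef, SimpleGraph.adjMatrix_vecMul_apply]
    simp [honesdef, hreg v]
  have hxo : x ⬝ᵥ ones = (X.card : ℝ) := by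
    simp [dotProduct, hxdef, honesdef, Finset.sum_ite_mem]
  have hox : ones ⬝ᵥ x = (X.card : ℝ) := by
    simp [dotProduct, hxdef, honesdef, Finset.sum_ite_mem]
  have hoy : ones ⬝ᵥ y = (U.card : ℝ) := by
    simp [dotProduct, hydef, honesdef, Finset.sum_ite_mem]
  have hyo : y ⬝ᵥ ones = (U.card : ℝ) := by
    simp [dotProduct, hydef, honesdef, Finset.sum_ite_mem]
  have hxx : x ⬝ᵥ x = (X.card : ℝ) := by
    have hsq : ∀ v, x v * x v = x v := by
      intro v
      by_cases h : v ∈ X <;> simp [hxdef, h]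
    simp only [dotProduct, hsq]
    simp [hxdef, Finset.sum_ite_mem]
  have hyy : y ⬝ᵥ y = (U.card : ℝ) := by
    have hsq : ∀ v, y v * y v = y v := by
      intro v
      by_cases h : v ∈ U <;> simp [hydef, h]
    simp only [dotProduct, hsq]
    simp [hydef, Finset.sum_ite_mem]
  have hoo : ones ⬝ᵥ ones = (n : ℝ) := by
    simp [dotProduct, honesdef]
  have hxay : x ⬝ᵥ (A *ᵥ y) = ∑ a ∈ X, ((G.neighborFinset a ∩ U).card : ℝ) := by
    have hv : ∀ v : Fin n, (A *ᵥ y) v = ((G.neighborFinset v ∩ U).card : ℝ) := by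
      intro v
      rw [hAdef, SimpleGraph.adjMatrix_mulVec_apply]
      simp [hydef, Finset.sum_ite_mem]
    simp only [dotProduct, hv, hxdef, ite_mul, one_mul, zero_mul]
    rw [Finset.sum_ite_mem, Finset.univ_inter]
  have hoay : ones ⬝ᵥ (A *ᵥ y) = (d : ℝ) * U.card := by
    rw [Matrix.dotProduct_mulVec, honesA, smul_dotProduct, hoy, smul_eq_mul]
  have hxao : x ⬝ᵥ (A *ᵥ ones) = (d : ℝ) * X.card := by
    rw [hAones, dotProduct_smul, hxo, smul_eq_mul]
  have hoao : ones ⬝ᵥ (A *ᵥ ones) = (d : ℝ) * n := by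
    rw [hAones, dotProduct_smul, hoo, smul_eq_mul]
  -- centered vectors
  set α : ℝ := (X.card : ℝ) / n with hα
  set β : ℝ := (U.card : ℝ) / n with hβ
  set x' := x - α • ones with hx'
  set y' := y - β • ones with hy'
  have hcenter : x' ⬝ᵥ (A *ᵥ y') = x ⬝ᵥ (A *ᵥ y) - (d : ℝ) * X.card * U.card / n := by
    rw [hx', hy', Matrix.mulVec_sub, Matrix.mulVec_smul, sub_dotProduct,
      dotProduct_sub, dotProduct_sub, smul_dotProduct,
      smul_dotProduct, dotProduct_smul, dotProduct_smul,
      hoay, hxao, hoao, hα, hβ]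
    simp only [smul_eq_mul]
    field_simp
    ring
  have hox' : ones ⬝ᵥ x' = 0 := by
    rw [hx', dotProduct_sub, dotProduct_smul, hox, hoo, hα, smul_eq_mul]
    field_simp
    ring
  have hoy' : ones ⬝ᵥ y' = 0 := by
    rw [hy', dotProduct_sub, dotProduct_smul, hoy, hoo, hβ, smul_eq_mul]
    field_simp
    ring
  have hxx' : x' ⬝ᵥ x' ≤ (X.card : ℝ) := by
    rw [hx', sub_dotProduct, dotProduct_sub, dotProduct_sub,
      smul_dotProduct, smul_dotProduct, dotProduct_smul,
      dotProduct_smul, hxx, hxo, hox, hoo, hα]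
    simp only [smul_eq_mul]
    have h1 : (0:ℝ) ≤ (X.card : ℝ) ^ 2 / n := div_nonneg (sq_nonneg _) (Nat.cast_nonneg _)
    have h2 : (X.card : ℝ) / n * ((X.card : ℝ) / n * n) = (X.card : ℝ)^2/n := by
      rw [div_mul_cancel₀ _ hn0]; ring
    have h3 : (X.card : ℝ) / n * (X.card : ℝ) = (X.card : ℝ)^2/n := by
      ring
    linarith [h1, h2, h3]
  have hyy' : y' ⬝ᵥ y' ≤ (U.card : ℝ) := by
    rw [hy', sub_dotProduct, dotProduct_sub, dotProduct_sub,
      smul_dotProduct, smul_dotProduct, dotProduct_smul,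
      dotProduct_smul, hyy, hyo, hoy, hoo, hβ]
    simp only [smul_eq_mul]
    have h1 : (0:ℝ) ≤ (U.card : ℝ) ^ 2 / n := div_nonneg (sq_nonneg _) (Nat.cast_nonneg _)
    have h2 : (U.card : ℝ) / n * ((U.card : ℝ) / n * n) = (U.card : ℝ)^2/n := by
      rw [div_mul_cancel₀ _ hn0]; ring
    have h3 : (U.card : ℝ) / n * (U.card : ℝ) = (U.card : ℝ)^2/n := by
      ring
    linarith [h1, h2, h3]
  have hxx'0 : 0 ≤ x' ⬝ᵥ x' := by
    simp only [dotProduct]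
    exact Finset.sum_nonneg fun i _ => mul_self_nonneg _
  have hyy'0 : 0 ≤ y' ⬝ᵥ y' := by
    simp only [dotProduct]
    exact Finset.sum_nonneg fun i _ => mul_self_nonneg _
  -- vanishing of the top coordinate when lam < d
  have hzero : lam < (d : ℝ) → ∀ v : Fin n → ℝ, ones ⬝ᵥ v = 0 → F v i₀ = 0 := by
    intro hld v hv
    set w := F ones with hw
    have hw_eq : ∀ i, μ i * w i = (d : ℝ) * w i := by
      have h1 : star P *ᵥ (A *ᵥ ones) = (d : ℝ) • w := by
        rw [hAones, Matrix.mulVec_smul]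
      have h2 : star P *ᵥ (A *ᵥ ones) = fun i => μ i * w i := by
        have hQA : star P * A = Matrix.diagonal μ * star P := by
          rw [hspec, ← mul_assoc, ← mul_assoc, hQP, one_mul]
        rw [Matrix.mulVec_mulVec, hQA, ← Matrix.mulVec_mulVec]
        funext i
        rw [Matrix.mulVec_diagonal]
      intro i
      have h3 := congrFun (h2.symm.trans h1) i
      simpa using h3
    have hwzero : ∀ i, i ≠ i₀ → w i = 0 := by
      intro i hi
      have hmu : μ i ≠ (d : ℝ) := by
        intro hcontr
        have hb := hbound i hi
        rw [hcontr] at hb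
        rw [abs_of_nonneg (by positivity : (0:ℝ) ≤ (d:ℝ))] at hb
        linarith
      have h4 : (μ i - d) * w i = 0 := by
        have := hw_eq i; ring_nf; linarith [hw_eq i]
      rcases mul_eq_zero.mp h4 with h | h
      · exact absurd (by linarith : μ i = (d : ℝ)) hmu
      · exact h
    have hww : w ⬝ᵥ w = (n : ℝ) := by rw [hw, key2, hoo]
    have hwn : w i₀ * w i₀ = (n : ℝ) := by
      rw [← hww]
      rw [show w ⬝ᵥ w = ∑ i, w i * w i from rfl]
      rw [Finset.sum_eq_single i₀]
      · intro i _ hi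
        rw [hwzero i hi, zero_mul]
      · intro h
        exact absurd (Finset.mem_univ i₀) h
    have hwi₀ : w i₀ ≠ 0 := by
      intro h
      rw [h, mul_zero] at hwn
      exact hn0 hwn.symm
    have hdot : w i₀ * F v i₀ = 0 := by
      have h5 : w ⬝ᵥ F v = 0 := by rw [hw, key2, hv]
      rw [← h5]
      rw [show w ⬝ᵥ F v = ∑ i, w i * F v i from rfl]
      rw [Finset.sum_eq_single i₀]
      · intro i _ hi
        rw [hwzero i hi, zero_mul]
      · intro h
        exact absurd (Finset.mem_univ i₀) h
    exact (mul_eq_zero.mp hdot).resolve_left hwi₀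
  -- Cauchy-Schwarz style bound
  have hcs : |x' ⬝ᵥ (A *ᵥ y')| ≤ lam * (Real.sqrt (x' ⬝ᵥ x') * Real.sqrt (y' ⬝ᵥ y')) := by
    rw [key1]
    have haa : ∑ i, F x' i ^ 2 = x' ⬝ᵥ x' := by
      rw [← key2 x' x']
      simp [dotProduct, sq]
    have hbb : ∑ i, F y' i ^ 2 = y' ⬝ᵥ y' := by
      rw [← key2 y' y']
      simp [dotProduct, sq]
    have hterm : ∀ i, |μ i * (F x' i * F y' i)| ≤ lam * (|F x' i| * |F y' i|) := by
      intro i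
      rcases eq_or_ne i i₀ with rfl | hne
      · by_cases hcase : (d : ℝ) ≤ lam
        · rw [abs_mul, abs_mul]
          refine mul_le_mul_of_nonneg_right ?_ (mul_nonneg (abs_nonneg _) (abs_nonneg _))
          rw [hi₀, abs_of_nonneg (by positivity : (0:ℝ) ≤ (d:ℝ))]
          exact hcase
        · have hai : F x' i = 0 := hzero (lt_of_not_ge hcase) x' hox'
          rw [hai]
          simp only [mul_zero, zero_mul, abs_zero]
          exact le_rfl
      · rw [abs_mul, abs_mul]
        exact mul_le_mul_of_nonneg_right (hbound i hne)
          (mul_nonneg (abs_nonneg _) (abs_nonneg _))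
    calc |∑ i, μ i * (F x' i * F y' i)| ≤ ∑ i, |μ i * (F x' i * F y' i)| :=
          Finset.abs_sum_le_sum_abs _ _
      _ ≤ ∑ i, lam * (|F x' i| * |F y' i|) := Finset.sum_le_sum fun i _ => hterm i
      _ = lam * ∑ i, |F x' i| * |F y' i| := by rw [Finset.mul_sum]
      _ ≤ lam * (Real.sqrt (x' ⬝ᵥ x') * Real.sqrt (y' ⬝ᵥ y')) := by
          refine mul_le_mul_of_nonneg_left ?_ hlam0
          have hcs2 := Real.sum_mul_le_sqrt_mul_sqrt Finset.univ
            (fun i => |F x' i|) (fun i => |F y' i|)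
          simpa [sq_abs, haa, hbb] using hcs2
  -- conclusion
  have hsq1 : Real.sqrt (x' ⬝ᵥ x') ≤ Real.sqrt (X.card : ℝ) := Real.sqrt_le_sqrt hxx'
  have hsq2 : Real.sqrt (y' ⬝ᵥ y') ≤ Real.sqrt (U.card : ℝ) := Real.sqrt_le_sqrt hyy'
  have hsqmul : Real.sqrt (X.card : ℝ) * Real.sqrt (U.card : ℝ)
      = Real.sqrt ((X.card : ℝ) * U.card) := (Real.sqrt_mul (Nat.cast_nonneg _) _).symm
  have hprod : Real.sqrt (x' ⬝ᵥ x') * Real.sqrt (y' ⬝ᵥ y') ≤ Real.sqrt ((X.card : ℝ) * U.card) := by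
    rw [← hsqmul]
    exact mul_le_mul hsq1 hsq2 (Real.sqrt_nonneg _) (Real.sqrt_nonneg _)
  have hfin : lam * (Real.sqrt (x' ⬝ᵥ x') * Real.sqrt (y' ⬝ᵥ y'))
      ≤ lam * Real.sqrt ((X.card : ℝ) * U.card) := mul_le_mul_of_nonneg_left hprod hlam0
  have habs := neg_abs_le (x' ⬝ᵥ (A *ᵥ y'))
  rw [← hxay]
  linarith [hcs, hcenter, habs, hfin]

end NDLAux


/-- Vertices of `U` with at most `d|U|/(2n)` neighbours in `U` are few. -/
theorem stmt16 {n d : ℕ} (G : SimpleGraph (Fin n)) [DecidableRel G.Adj] (lam : ℝ)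
    (hG : NDL.IsNDL G d lam) (hd : 0 < d) (U : Finset (Fin n)) :
    (((U.filter fun v =>
        ((G.neighborFinset v ∩ U).card : ℝ) ≤ (d : ℝ) * U.card / (2 * n)).card : ℝ)) ≤
      (2 * lam * n / d) ^ 2 / U.card := by
  obtain ⟨hreg, hA, i₀, hi₀, hbound⟩ := hG
  set X := U.filter fun v =>
      ((G.neighborFinset v ∩ U).card : ℝ) ≤ (d : ℝ) * U.card / (2 * n) with hXdef
  rcases Nat.eq_zero_or_pos n with hn | hn
  · subst hn
    have hU : U = ∅ := Finset.eq_empty_of_isEmpty U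
    simp [hXdef, hU]
  by_cases hU0 : U.card = 0
  · have hU : U = ∅ := Finset.card_eq_zero.mp hU0
    simp [hXdef, hU]
  by_cases hX0 : X.card = 0
  · rw [hX0, Nat.cast_zero]
    positivity
  have hs0 : (0:ℝ) < X.card := Nat.cast_pos.mpr (Nat.pos_of_ne_zero hX0)
  have hu0 : (0:ℝ) < U.card := Nat.cast_pos.mpr (Nat.pos_of_ne_zero hU0)
  have hN0 : (0:ℝ) < n := Nat.cast_pos.mpr hn
  have hD0 : (0:ℝ) < d := Nat.cast_pos.mpr hd
  have hmix := NDLAux.mixing G hreg hA i₀ hi₀ hbound hd hn X U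
  have hup : ∑ a ∈ X, ((G.neighborFinset a ∩ U).card : ℝ)
      ≤ (X.card : ℝ) * ((d : ℝ) * U.card / (2 * n)) := by
    have h := Finset.sum_le_card_nsmul X (fun a => ((G.neighborFinset a ∩ U).card : ℝ))
      ((d : ℝ) * U.card / (2 * n)) ?_
    · simpa [nsmul_eq_mul] using h
    · intro a ha
      exact (Finset.mem_filter.mp ha).2
  set S := Real.sqrt ((X.card : ℝ) * U.card) with hS
  have hS2 : S ^ 2 = (X.card : ℝ) * U.card := Real.sq_sqrt (by positivity)
  have hS0 : 0 < S := Real.sqrt_pos.mpr (by positivity)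
  have heq1 : (d:ℝ) * X.card * U.card / n = 2 * ((d:ℝ) * X.card * U.card / (2*n)) := by
    field_simp
  have heq2 : (X.card:ℝ) * ((d:ℝ) * U.card / (2*n)) = (d:ℝ) * X.card * U.card / (2*n) := by
    ring
  have h1 : (d:ℝ) * X.card * U.card / (2*n) ≤ lam * S := by
    rw [heq2] at hup
    linarith [hmix, hup, heq1]
  have h2 : (d:ℝ) * S * S / (2*n) ≤ lam * S := by
    have heq3 : (d:ℝ) * S * S / (2*n) = (d:ℝ) * (X.card:ℝ) * U.card / (2*n) := by
      rw [show (d:ℝ)*S*S = (d:ℝ)*S^2 by ring, hS2]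
      ring
    rw [heq3]
    exact h1
  have h3 : (d:ℝ) * S / (2*n) ≤ lam := by
    have h' : ((d:ℝ) * S / (2*n)) * S ≤ lam * S := by
      calc ((d:ℝ) * S / (2*n)) * S = (d:ℝ) * S * S / (2*n) := by ring
        _ ≤ lam * S := h2
    exact le_of_mul_le_mul_right h' hS0
  have h4 : S ≤ 2 * lam * n / d := by
    rw [le_div_iff₀ hD0]
    have h'' := (div_le_iff₀ (by positivity : (0:ℝ) < 2*n)).mp h3
    linarith [h'']
  have h5 : (X.card:ℝ) * U.card ≤ (2 * lam * n / d)^2 := by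
    rw [← hS2]
    exact pow_le_pow_left₀ hS0.le h4 2
  rw [le_div_iff₀ hu0]
  exact h5
end

section
/- Let G be an (n,d,λ)-graph and let U ⊆ V(G). Let X₁ = {v ∈ U : deg_U(v) ≥ 2d|U|/n}. Then |X₁| ≤ (λn/d)²/|U|. -/
open Finset

open Matrix

section Aux

variable {n : ℕ}

noncomputable def indVec (S : Finset (Fin n)) : EuclideanSpace ℝ (Fin n) :=
  (WithLp.equiv 2 _).symm (fun v => if v ∈ S then (1:ℝ) else 0)

lemma indVec_apply (S : Finset (Fin n)) (v : Fin n) :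
    indVec S v = if v ∈ S then (1:ℝ) else 0 := rfl

lemma inner_indVec_indVec (S : Finset (Fin n)) :
    (inner ℝ (indVec S) (indVec S) : ℝ) = S.card := by
  rw [PiLp.inner_apply]
  simp only [RCLike.inner_apply, conj_trivial, indVec_apply, ite_mul, one_mul, zero_mul]
  simp [Finset.sum_ite_mem]

noncomputable def oneVec (n : ℕ) : EuclideanSpace ℝ (Fin n) :=
  (WithLp.equiv 2 _).symm (fun _ => (1:ℝ))

lemma inner_oneVec (z : EuclideanSpace ℝ (Fin n)) :
    (inner ℝ (oneVec n) z : ℝ) = ∑ v, z v := by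
  rw [PiLp.inner_apply]; simp [oneVec]

lemma inner_oneVec_indVec (S : Finset (Fin n)) :
    (inner ℝ (oneVec n) (indVec S) : ℝ) = S.card := by
  rw [inner_oneVec]
  simp [indVec_apply, Finset.sum_ite_mem]

lemma inner_oneVec_oneVec : (inner ℝ (oneVec n) (oneVec n) : ℝ) = n := by
  rw [inner_oneVec]; simp [oneVec]

end Aux

/-- Vertices of `U` with at least `2d|U|/n` neighbours in `U` are few. -/
theorem stmt17 {n d : ℕ} (G : SimpleGraph (Fin n)) [DecidableRel G.Adj] (lam : ℝ)
    (hG : NDL.IsNDL G d lam) (hd : 0 < d) (U : Finset (Fin n)) :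
    (((U.filter fun v =>
        2 * (d : ℝ) * U.card / n ≤ ((G.neighborFinset v ∩ U).card : ℝ)).card : ℝ)) ≤
      (lam * n / d) ^ 2 / U.card := by
  classical
  obtain ⟨hreg, hA, i₀, hμ₀, hlam⟩ := hG
  set X := U.filter fun v =>
      2 * (d : ℝ) * U.card / n ≤ ((G.neighborFinset v ∩ U).card : ℝ) with hXdef
  have hXU : X ⊆ U := filter_subset _ _
  by_cases hU0 : U.card = 0
  · have hx0 : X.card = 0 := Nat.le_zero.mp (hU0 ▸ card_le_card hXU)
    simp [hx0, hU0]
  have hn : 0 < n := i₀.pos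
  have hU : 0 < (U.card : ℝ) := by positivity
  have hd' : 0 < (d : ℝ) := by exact_mod_cast hd
  have hn' : 0 < (n : ℝ) := by exact_mod_cast hn
  have hUn : (U.card : ℝ) ≤ n := by
    exact_mod_cast (card_le_univ U).trans_eq (by simp)
  -- lam is nonnegative
  have hl0 : 0 ≤ lam := by
    by_contra hneg
    push_neg at hneg
    have hall : ∀ i : Fin n, i = i₀ := by
      intro i
      by_contra hi
      exact absurd ((abs_nonneg _).trans (hlam i hi)) (not_le.mpr hneg)
    have hn1 : n = 1 := by
      have h1 : Fintype.card (Fin n) ≤ 1 :=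
        Fintype.card_le_one_iff.mpr (fun a b => (hall a).trans (hall b).symm)
      simp only [Fintype.card_fin] at h1
      omega
    have hdeg := hreg i₀
    rw [SimpleGraph.degree] at hdeg
    have hempty : G.neighborFinset i₀ = ∅ := by
      ext w
      simp only [SimpleGraph.mem_neighborFinset, Finset.notMem_empty, iff_false]
      intro h
      have hw : w = i₀ := by subst hn1; exact Subsingleton.elim w i₀
      exact G.loopless.irrefl i₀ (hw ▸ h)
    rw [hempty] at hdeg
    simp at hdeg
    omega
  -- trivial case : lam ≥ d
  by_cases hld : (d : ℝ) ≤ lam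
  · have hXcard : (X.card : ℝ) ≤ U.card := by exact_mod_cast card_le_card hXU
    have h1 : (n : ℝ) ≤ lam * n / d := by
      rw [le_div_iff₀ hd']
      nlinarith
    have h2 : ((n:ℝ)) ^ 2 ≤ (lam * n / d) ^ 2 := by
      apply pow_le_pow_left₀ (by positivity) h1
    rw [le_div_iff₀ hU]
    nlinarith
  push_neg at hld
  -- Main case: spectral facts
  set b := hA.eigenvectorBasis with hb
  set μ := hA.eigenvalues with hμ
  set T := Matrix.toEuclideanLin (G.adjMatrix ℝ) with hT
  have hsym : ∀ x y : EuclideanSpace ℝ (Fin n), (inner ℝ (T x) y : ℝ) = inner ℝ x (T y) :=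
    (Matrix.isHermitian_iff_isSymmetric.mp hA)
  have hTb : ∀ i, T (b i) = μ i • b i := by
    intro i
    have h := hA.mulVec_eigenvectorBasis i
    ext v
    rw [hT, Matrix.toEuclideanLin_apply]
    simpa using congrFun h v
  have hinner_Tb : ∀ (i) (z : EuclideanSpace ℝ (Fin n)),
      (inner ℝ (b i) (T z) : ℝ) = μ i * inner ℝ (b i) z := by
    intro i z
    rw [← hsym, hTb i, real_inner_smul_left]
  have hexp : ∀ x y : EuclideanSpace ℝ (Fin n),
      (inner ℝ x (T y) : ℝ) = ∑ i, μ i * ((inner ℝ (b i) x : ℝ) * (inner ℝ (b i) y : ℝ)) := by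
    intro x y
    rw [← OrthonormalBasis.sum_inner_mul_inner b x (T y)]
    refine Finset.sum_congr rfl fun i _ => ?_
    rw [hinner_Tb i y, real_inner_comm x (b i)]
    ring
  have hpars : ∀ x : EuclideanSpace ℝ (Fin n),
      ∑ i, (inner ℝ (b i) x : ℝ) ^ 2 = (inner ℝ x x : ℝ) := by
    intro x
    rw [← OrthonormalBasis.sum_inner_mul_inner b x x]
    refine Finset.sum_congr rfl fun i _ => ?_
    rw [real_inner_comm x (b i)]
    ring
  have hTone : T (oneVec n) = (d : ℝ) • oneVec n := by
    ext v
    rw [hT, Matrix.toEuclideanLin_apply]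
    have h := G.adjMatrix_mulVec_const_apply_of_regular (α := ℝ) (a := (1:ℝ)) hreg (v := v)
    simpa [oneVec, Function.const] using h
  have hone_perp : ∀ i, i ≠ i₀ → (inner ℝ (oneVec n) (b i) : ℝ) = 0 := by
    intro i hi
    have h1 : (inner ℝ (b i) (T (oneVec n)) : ℝ) = μ i * inner ℝ (b i) (oneVec n) := hinner_Tb i _
    rw [hTone, real_inner_smul_right] at h1
    have hμi : μ i ≠ (d : ℝ) := by
      have h2 : μ i ≤ lam := (le_abs_self _).trans (hlam i hi)
      linarith
    rw [real_inner_comm (b i) (oneVec n)]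
    rcases mul_eq_zero.mp (by linarith [h1] :
        (μ i - d) * (inner ℝ (b i) (oneVec n) : ℝ) = 0) with h | h
    · exact absurd (by linarith : μ i = (d:ℝ)) hμi
    · exact h
  have hone_exp : ∀ z : EuclideanSpace ℝ (Fin n),
      (inner ℝ (oneVec n) z : ℝ) = (inner ℝ (oneVec n) (b i₀) : ℝ) * (inner ℝ (b i₀) z : ℝ) := by
    intro z
    rw [← OrthonormalBasis.sum_inner_mul_inner b (oneVec n) z]
    apply Finset.sum_eq_single i₀
    · intro i _ hi
      rw [hone_perp i hi, zero_mul]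
    · intro h
      exact absurd (Finset.mem_univ i₀) h
  -- specialized scalar facts
  have hrr : (inner ℝ (oneVec n) (b i₀) : ℝ) * (inner ℝ (oneVec n) (b i₀) : ℝ) = n := by
    have h := hone_exp (oneVec n)
    rw [inner_oneVec_oneVec, real_inner_comm (oneVec n) (b i₀)] at h
    linarith
  have hrx : (inner ℝ (oneVec n) (b i₀) : ℝ) * (inner ℝ (b i₀) (indVec X) : ℝ) = X.card := by
    rw [← hone_exp (indVec X), inner_oneVec_indVec]
  have hry : (inner ℝ (oneVec n) (b i₀) : ℝ) * (inner ℝ (b i₀) (indVec U) : ℝ) = U.card := by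
    rw [← hone_exp (indVec U), inner_oneVec_indVec]
  have hsum_a : ∑ i, (inner ℝ (b i) (indVec X) : ℝ) ^ 2 = X.card := by
    rw [hpars (indVec X), inner_indVec_indVec]
  have hsum_c : ∑ i, (inner ℝ (b i) (indVec U) : ℝ) ^ 2 = U.card := by
    rw [hpars (indVec U), inner_indVec_indVec]
  have hexy : (inner ℝ (indVec X) (T (indVec U)) : ℝ)
      = ∑ i, μ i * ((inner ℝ (b i) (indVec X) : ℝ) * (inner ℝ (b i) (indVec U) : ℝ)) :=
    hexp _ _
  have he_comb : (inner ℝ (indVec X) (T (indVec U)) : ℝ)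
      = ∑ v ∈ X, ((G.neighborFinset v ∩ U).card : ℝ) := by
    rw [PiLp.inner_apply]
    simp only [RCLike.inner_apply, conj_trivial]
    have hTy : ∀ v, (T (indVec U)) v = ((G.neighborFinset v ∩ U).card : ℝ) := by
      intro v
      rw [hT, Matrix.toEuclideanLin_apply]
      have h1 : ((G.adjMatrix ℝ) *ᵥ ((WithLp.equiv 2 (Fin n → ℝ)) (indVec U))) v
          = ∑ w ∈ G.neighborFinset v, ((WithLp.equiv 2 (Fin n → ℝ)) (indVec U)) w :=
        G.adjMatrix_mulVec_apply v _
      have h2 : (WithLp.toLp 2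
            ((G.adjMatrix ℝ) *ᵥ (indVec U).ofLp)).ofLp v
          = ((G.adjMatrix ℝ) *ᵥ ((WithLp.equiv 2 (Fin n → ℝ)) (indVec U))) v := rfl
      rw [h2, h1]
      have h3 : ∀ w, ((WithLp.equiv 2 (Fin n → ℝ)) (indVec U)) w
          = if w ∈ U then (1:ℝ) else 0 := fun w => rfl
      rw [Finset.sum_congr rfl fun w _ => h3 w, Finset.sum_ite_mem,
        Finset.sum_const, nsmul_eq_mul, mul_one]
    rw [Finset.sum_congr rfl (fun v (_ : v ∈ Finset.univ) => by rw [hTy v])]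
    simp only [indVec_apply, ite_mul, one_mul, zero_mul, mul_ite, mul_one, mul_zero]
    rw [Finset.sum_ite_mem, Finset.univ_inter]
  -- forget the definitions, work with scalars
  clear_value b μ T
  clear hexp hpars hone_exp hone_perp hTone hinner_Tb hTb hsym hT hb
  obtain ⟨a, ha⟩ : ∃ a : Fin n → ℝ, ∀ i, (inner ℝ (b i) (indVec X) : ℝ) = a i :=
    ⟨_, fun _ => rfl⟩
  obtain ⟨c, hc⟩ : ∃ c : Fin n → ℝ, ∀ i, (inner ℝ (b i) (indVec U) : ℝ) = c i :=
    ⟨_, fun _ => rfl⟩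
  obtain ⟨r, hrdef⟩ : ∃ r : ℝ, (inner ℝ (oneVec n) (b i₀) : ℝ) = r := ⟨_, rfl⟩
  obtain ⟨e, hedef⟩ : ∃ e : ℝ, (inner ℝ (indVec X) (T (indVec U)) : ℝ) = e := ⟨_, rfl⟩
  rw [hrdef] at hrr hrx hry
  rw [ha i₀] at hrx
  rw [hc i₀] at hry
  simp only [ha] at hsum_a
  simp only [hc] at hsum_c
  rw [hedef] at hexy he_comb
  simp only [ha, hc] at hexy
  set s : ℝ := (X.card : ℝ) with hs
  set u : ℝ := (U.card : ℝ) with hu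
  clear_value s u
  -- lower bound on e
  have he_lower : s * (2 * d * u / n) ≤ e := by
    rw [he_comb, hs]
    have h := Finset.card_nsmul_le_sum X (fun v => ((G.neighborFinset v ∩ U).card : ℝ))
      (2 * d * u / n) (fun v hv => by
        rw [hXdef] at hv
        exact (Finset.mem_filter.mp hv).2)
    simpa [nsmul_eq_mul, mul_comm] using h
  -- Cauchy-Schwarz
  have hsu : (0:ℝ) ≤ s * u := by rw [hs, hu]; positivity
  have hw2 : Real.sqrt (s * u) ^ 2 = s * u := Real.sq_sqrt hsu
  have hw0 : 0 ≤ Real.sqrt (s * u) := Real.sqrt_nonneg _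
  have hCS : ∑ i, |a i| * |c i| ≤ Real.sqrt (s * u) := by
    have h1 : (∑ i, |a i| * |c i|) ^ 2 ≤ (∑ i, |a i| ^ 2) * (∑ i, |c i| ^ 2) :=
      Finset.sum_mul_sq_le_sq_mul_sq _ _ _
    have h2 : (∑ i, |a i| ^ 2) = s := by
      rw [← hsum_a]; exact Finset.sum_congr rfl fun i _ => sq_abs _
    have h3 : (∑ i, |c i| ^ 2) = u := by
      rw [← hsum_c]; exact Finset.sum_congr rfl fun i _ => sq_abs _
    rw [h2, h3] at h1
    have h4 : 0 ≤ ∑ i, |a i| * |c i| :=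
      Finset.sum_nonneg fun i _ => mul_nonneg (abs_nonneg _) (abs_nonneg _)
    exact (Real.le_sqrt h4 hsu).mpr h1
  -- error term bound
  have hR : |∑ i ∈ Finset.univ.erase i₀, μ i * (a i * c i)| ≤ lam * Real.sqrt (s * u) := by
    calc |∑ i ∈ Finset.univ.erase i₀, μ i * (a i * c i)|
        ≤ ∑ i ∈ Finset.univ.erase i₀, |μ i * (a i * c i)| := Finset.abs_sum_le_sum_abs _ _
      _ ≤ ∑ i ∈ Finset.univ.erase i₀, lam * (|a i| * |c i|) := by
          refine Finset.sum_le_sum fun i hi => ?_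
          rw [abs_mul, abs_mul]
          exact mul_le_mul_of_nonneg_right (hlam i (Finset.mem_erase.mp hi).1)
            (mul_nonneg (abs_nonneg _) (abs_nonneg _))
      _ ≤ ∑ i, lam * (|a i| * |c i|) :=
          Finset.sum_le_sum_of_subset_of_nonneg (Finset.erase_subset _ _)
            (fun i _ _ => mul_nonneg hl0 (mul_nonneg (abs_nonneg _) (abs_nonneg _)))
      _ = lam * ∑ i, |a i| * |c i| := by rw [← Finset.mul_sum]
      _ ≤ lam * Real.sqrt (s * u) := mul_le_mul_of_nonneg_left hCS hl0
  -- main term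
  have hmain : μ i₀ * (a i₀ * c i₀) = d * (s * u) / n := by
    rw [hμ₀, eq_div_iff hn'.ne']
    linear_combination (-(↑d * (a i₀ * c i₀))) * hrr + (↑d * r * a i₀) * hry + (↑d * u) * hrx
  have he_split : e = μ i₀ * (a i₀ * c i₀) + ∑ i ∈ Finset.univ.erase i₀, μ i * (a i * c i) := by
    rw [hexy, ← Finset.add_sum_erase _ (fun i => μ i * (a i * c i)) (Finset.mem_univ i₀)]
  have he_upper : e ≤ d * (s * u) / n + lam * Real.sqrt (s * u) := by
    rw [he_split, hmain]
    linarith [(abs_le.mp hR).2]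
  -- combine
  have hkey : d * (s * u) / n ≤ lam * Real.sqrt (s * u) := by
    have hq : s * (2 * d * u / n) = 2 * (d * (s * u) / n) := by ring
    rw [hq] at he_lower
    linarith
  rcases eq_or_lt_of_le (show (0:ℝ) ≤ s by rw [hs]; positivity) with hs0 | hs0
  · rw [← hs0]
    exact div_nonneg (sq_nonneg _) (by rw [hu]; positivity)
  · rw [le_div_iff₀ hU, div_pow, le_div_iff₀ (by positivity : (0:ℝ) < (d:ℝ)^2)]
    have h1 : (d:ℝ) * (s * u) ≤ lam * Real.sqrt (s * u) * n := by
      rw [div_le_iff₀ hn'] at hkey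
      linarith
    have h2 : ((d:ℝ) * (s * u))^2 ≤ (lam * Real.sqrt (s * u) * n)^2 :=
      pow_le_pow_left₀ (by positivity) h1 2
    have h3 : (lam * Real.sqrt (s * u) * n)^2 = lam^2 * (s * u) * n^2 := by
      rw [mul_pow, mul_pow, hw2]
    rw [h3] at h2
    have hsu' : 0 < s * u := mul_pos hs0 hU
    rw [← mul_le_mul_iff_of_pos_right hsu']
    calc s * u * (d:ℝ)^2 * (s * u) = ((d:ℝ) * (s * u))^2 := by ring
      _ ≤ lam^2 * (s * u) * n^2 := h2
      _ = (lam * n)^2 * (s * u) := by ring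
end
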